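/- Fix integers K ≥ 1 and k with 0 ≤ k ≤ K−1, and reals η > 0, τ > 0, η_n > 0, q > 0, r ≥ 0, i_max > 0. Let μ_T : {1,…,K} → ℝ satisfy μ_T(t) ≥ 0 for all t, and define μ_e(l) = η·∑_{t=l+1}^{K} τ^{t−l−1}·μ_T(t) for l ∈ {0,…,K−1}. Let s : {0,…,K} → ℝ and i_n : {0,…,K−1} → ℝ satisfy the state-of-charge dynamics s(t+1) = s(t) + η_n·i_n(t), with i_n(t) ≥ 0 and s(t+1) ≤ 1 for all t ∈ {0,…,K−1}. Let i_total, e : {0,…,K−1} → ℝ satisfy, for every l ∈ {0,…,K−1}: i_total(l) > 0, e(l) ≥ (i_total(l))², and the complementary slackness condition μ_e(l)·((i_total(l))² − e(l)) = 0. Assume at index k there are reals μ̄_i ≥ 0, μ_i ≥ 0, μ̄_s ≥ 0 and I ∈ {0,1} such that i_n(k) < i_max, μ̄_i·(i_n(k) − i_max) = 0, and the stationarity identity 2·μ_e(k)·i_total(k) = η_n·(2q·∑_{t=k+1}^{K} (1 − s(t)) + I·μ̄_s) + μ_i − 2r·i_n(k) − μ̄_i holds. If either (r = 0 and s(k+1)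 < 1) or (r > 0 and s(k+1) < (M + s(0))/(M + 1), where M = (q/r)·η_n²), then e(l) = (i_total(l))² for all l ∈ {0,…,k}. -/

import Mathlib

/-- Theorem 1 (Main Result): tightness of the SOCP relaxation of the EV charging
problem. If at a KKT point some EV charger is throttled at timestep `k`
(`i_n k < i_max`) and its state of charge is sufficiently low, then the relaxed
quadratic constraint `e l ≥ (i_total l)^2` is tight for all timesteps `l ≤ k`. -/
theorem socp_relaxation_tightness
    (K k : ℕ) (hK : 1 ≤ K) (hk : k ≤ K - 1)
    (η τ ηn q r i_max : ℝ)
    (hη : 0 < η) (hτ : 0 < τ) (hηn : 0 < ηn) (hq : 0 < q) (hr : 0 ≤ r)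
    (himax : 0 < i_max)
    (μT : ℕ → ℝ) (hμT : ∀ t, 1 ≤ t → t ≤ K → 0 ≤ μT t)
    (μe : ℕ → ℝ)
    (hμe : ∀ l, l ≤ K - 1 →
      μe l = η * ∑ t ∈ Finset.Icc (l + 1) K, τ ^ (t - l - 1) * μT t)
    (s iN : ℕ → ℝ)
    (hdyn : ∀ t, t ≤ K - 1 → s (t + 1) = s t + ηn * iN t)
    (hiN : ∀ t, t ≤ K - 1 → 0 ≤ iN t)
    (hs1 : ∀ t, t ≤ K - 1 → s (t + 1) ≤ 1)
    (i_total e : ℕ → ℝ)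
    (hipos : ∀ l, l ≤ K - 1 → 0 < i_total l)
    (hrelax : ∀ l, l ≤ K - 1 → (i_total l) ^ 2 ≤ e l)
    (hcs : ∀ l, l ≤ K - 1 → μe l * ((i_total l) ^ 2 - e l) = 0)
    (μbar_i μ_i μbar_s I : ℝ)
    (hμbar_i : 0 ≤ μbar_i) (hμ_i : 0 ≤ μ_i) (hμbar_s : 0 ≤ μbar_s)
    (hI : I = 0 ∨ I = 1)
    (hthrottle : iN k < i_max)
    (hcs_i : μbar_i * (iN k - i_max) = 0)
    (hstat : 2 * μe k * i_total k =
      ηn * (2 * q * (∑ t ∈ Finset.Icc (k + 1) K, (1 - s t)) + I * μbar_s)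
        + μ_i - 2 * r * iN k - μbar_i)
    (hcond : (r = 0 ∧ s (k + 1) < 1) ∨
      (0 < r ∧ s (k + 1) < ((q / r) * ηn ^ 2 + s 0) / ((q / r) * ηn ^ 2 + 1))) :
    ∀ l, l ≤ k → e l = (i_total l) ^ 2 := by
  have hkK : k + 1 ≤ K := by omega
  -- μbar_i = 0
  have hbi0 : μbar_i = 0 := by
    rcases mul_eq_zero.mp hcs_i with h | h
    · exact h
    · linarith
  -- monotonicity of s up to k
  have hmono : ∀ t, t ≤ k → s 0 ≤ s t := by
    intro t ht
    induction t with
    | zero => exact le_rfl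
    | succ n ih =>
      have hn : n ≤ K - 1 := by omega
      have := hdyn n hn
      have h1 : 0 ≤ iN n := hiN n hn
      have h2 : s 0 ≤ s n := ih (by omega)
      nlinarith
  have hs0k : s 0 ≤ s k := hmono k le_rfl
  -- s t ≤ 1 on [k+1, K]
  have hsle : ∀ t ∈ Finset.Icc (k + 1) K, (0:ℝ) ≤ 1 - s t := by
    intro t ht
    simp only [Finset.mem_Icc] at ht
    have : s ((t - 1) + 1) ≤ 1 := hs1 (t - 1) (by omega)
    have ht1 : t - 1 + 1 = t := by omega
    rw [ht1] at this
    linarith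
  have hSmem : k + 1 ∈ Finset.Icc (k + 1) K := by simp [Finset.mem_Icc]; omega
  set S : ℝ := ∑ t ∈ Finset.Icc (k + 1) K, (1 - s t) with hSdef
  have hS : 1 - s (k + 1) ≤ S := Finset.single_le_sum hsle hSmem
  have hIμ : 0 ≤ I * μbar_s := by
    rcases hI with h | h <;> simp [h] <;> linarith
  -- iN k bound
  have hdk := hdyn k (by omega)
  -- RHS positive
  have hrhs : 0 < 2 * μe k * i_total k := by
    rw [hstat, hbi0]
    rcases hcond with ⟨hr0, hslt⟩ | ⟨hrpos, hslt⟩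
    · have hpos : 0 < 2 * q * S + I * μbar_s := by nlinarith
      have := mul_pos hηn hpos
      rw [hr0]
      linarith
    · have hM : 0 < (q / r) * ηn ^ 2 + 1 := by positivity
      have hslt' : s (k + 1) * ((q / r) * ηn ^ 2 + 1) < (q / r) * ηn ^ 2 + s 0 :=
        (lt_div_iff₀ hM).mp hslt
      have hqr : q / r * r = q := div_mul_cancel₀ q (ne_of_gt hrpos)
      have key : r * (s (k + 1) - s 0) < q * ηn ^ 2 * (1 - s (k + 1)) := by
        have h2 := mul_lt_mul_of_pos_left hslt' hrpos
        have h3 : r * (s (k + 1) * (q / r * ηn ^ 2 + 1))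
            = s (k + 1) * ((q / r * r) * ηn ^ 2) + r * s (k + 1) := by ring
        have h4 : r * (q / r * ηn ^ 2 + s 0) = (q / r * r) * ηn ^ 2 + r * s 0 := by ring
        rw [h3, h4, hqr] at h2
        nlinarith [h2]
      have hiNk : ηn * iN k = s (k + 1) - s k := by linarith
      have hiNb : r * (ηn * iN k) ≤ r * (s (k + 1) - s 0) := by
        rw [hiNk]
        have : s (k + 1) - s k ≤ s (k + 1) - s 0 := by linarith
        nlinarith
      have hSpos : q * ηn ^ 2 * (1 - s (k + 1)) ≤ q * ηn ^ 2 * S :=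
        mul_le_mul_of_nonneg_left hS (by positivity)
      have hchain : r * (ηn * iN k) < q * ηn ^ 2 * S := by linarith
      have hfin : 0 < ηn * (ηn * (2 * q * S + I * μbar_s) + μ_i - 2 * r * iN k) := by
        have h1 : ηn * (ηn * (2 * q * S + I * μbar_s) + μ_i - 2 * r * iN k)
            = 2 * (q * ηn ^ 2 * S - r * (ηn * iN k)) + ηn ^ 2 * (I * μbar_s) + ηn * μ_i := by
          ring
        rw [h1]
        linarith [hchain, mul_nonneg (sq_nonneg ηn) hIμ, mul_nonneg hηn.le hμ_i]
      rcases mul_pos_iff.mp hfin with ⟨_, h⟩ | ⟨h, _⟩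
      · linarith
      · linarith
  have hipk := hipos k (by omega)
  have hμek : 0 < μe k := by
    rcases mul_pos_iff.mp hrhs with ⟨h1, _⟩ | ⟨_, h2⟩
    · linarith
    · linarith
  -- extract a positive μT term
  have hμeksum : 0 < ∑ t ∈ Finset.Icc (k + 1) K, τ ^ (t - k - 1) * μT t := by
    have h := hμe k hk
    rw [h] at hμek
    rcases mul_pos_iff.mp hμek with ⟨_, h2⟩ | ⟨h1, _⟩
    · exact h2
    · linarith
  have hex : ∃ t0 ∈ Finset.Icc (k + 1) K, 0 < μT t0 := by
    by_contra hcon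
    push_neg at hcon
    have : ∑ t ∈ Finset.Icc (k + 1) K, τ ^ (t - k - 1) * μT t ≤ 0 := by
      apply Finset.sum_nonpos
      intro t ht
      simp only [Finset.mem_Icc] at ht
      have h1 : μT t ≤ 0 := hcon t (by simp [Finset.mem_Icc]; omega)
      have h2 : (0:ℝ) < τ ^ (t - k - 1) := pow_pos hτ _
      exact mul_nonpos_iff.mpr (Or.inl ⟨h2.le, h1⟩)
    linarith
  obtain ⟨t0, ht0mem, ht0pos⟩ := hex
  simp only [Finset.mem_Icc] at ht0mem
  -- now for each l ≤ k, μe l > 0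
  intro l hl
  have hlK : l ≤ K - 1 := by omega
  have hμel : 0 < μe l := by
    rw [hμe l hlK]
    apply mul_pos hη
    apply Finset.sum_pos'
    · intro t ht
      simp only [Finset.mem_Icc] at ht
      have := hμT t (by omega) ht.2
      positivity
    · refine ⟨t0, by simp [Finset.mem_Icc]; omega, ?_⟩
      have : (0:ℝ) < τ ^ (t0 - l - 1) := pow_pos hτ _
      positivity
  have := hcs l hlK
  rcases mul_eq_zero.mp this with h | h
  · linarith
  · linarith
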